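/- Let X be a topologically complete metric space, let g be a porosity function for which there exist d > 2 and δ > 0 such that g(x) > d·x for all x ∈ (0,δ), and let A ⊆ X. Then for every separable subset S₀ ⊆ X there exists a closed separable set Y ⊆ X with S₀ ⊆ Y such that: if A is σ-⟨g⟩-porous in X, then A ∩ Y is σ-⟨g⟩-porous in the metric subspace Y. -/

import Mathlib

open Metric Filter Set Topology TopologicalSpace NNReal ENNReal

/-- `A` is `⟨g⟩`-porous at `x` (for a porosity function `g` defined on `[0,h)`) if there are
sequences of centers `c n` and radii `0 < r n < h` with `c n → x`, `U(c n, r n) ∩ A = ∅` and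
`x ∈ U(c n, g (r n))` for each `n`. -/
def GPorousAt {X : Type*} [MetricSpace X] (g : ℝ → ℝ) (h : ℝ) (A : Set X) (x : X) : Prop :=
  ∃ (c : ℕ → X) (r : ℕ → ℝ), Filter.Tendsto c Filter.atTop (nhds x) ∧
    ∀ n, 0 < r n ∧ r n < h ∧ Metric.ball (c n) (r n) ∩ A = ∅ ∧
      x ∈ Metric.ball (c n) (g (r n))

/-- `A` is `⟨g⟩`-porous if it is `⟨g⟩`-porous at each of its points. -/
def GPorous {X : Type*} [MetricSpace X] (g : ℝ → ℝ) (h : ℝ) (A : Set X) : Prop :=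
  ∀ x ∈ A, GPorousAt g h A x

/-- `A` is σ-`⟨g⟩`-porous if it is a countable union of `⟨g⟩`-porous sets. -/
def SigmaGPorous {X : Type*} [MetricSpace X] (g : ℝ → ℝ) (h : ℝ) (A : Set X) : Prop :=
  ∃ B : ℕ → Set X, (∀ n, GPorous g h (B n)) ∧ A = ⋃ n, B n

/-- A metric space is topologically complete if its topology is induced by some complete
metric. -/
def TopComplete (X : Type*) [m : MetricSpace X] : Prop :=
  ∃ m' : MetricSpace X, m'.toUniformSpace.toTopologicalSpace =
      m.toUniformSpace.toTopologicalSpace ∧ @CompleteSpace X m'.toUniformSpace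

/-- Separable reduction of σ-`⟨g⟩`-porosity for porosity functions satisfying `g x > d * x`
near `0` for some `d > 2`. -/
theorem sigmaGPorous_separable_reduction {X : Type*} [MetricSpace X]
    (hX : TopComplete X) (g : ℝ → ℝ) (h : ℝ) (hh : 0 < h) (hg0 : g 0 = 0)
    (hg : StrictMonoOn g (Set.Ico 0 h))
    (hgrow : ∃ (d : ℝ) (δ : ℝ), 2 < d ∧ 0 < δ ∧ ∀ x ∈ Set.Ioo (0 : ℝ) δ, d * x < g x)
    (A : Set X) (S₀ : Set X) (hS₀ : TopologicalSpace.IsSeparable S₀) :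
    ∃ Y : Set X, IsClosed Y ∧ TopologicalSpace.IsSeparable Y ∧ S₀ ⊆ Y ∧
      (SigmaGPorous g h A → SigmaGPorous g h ((Subtype.val ⁻¹' A) : Set Y)) := by
  classical
  by_cases hAp : SigmaGPorous g h A
  · obtain ⟨B, hB, hA⟩ := hAp
    obtain ⟨T, hTc, hTsub⟩ := hS₀
    -- a witness-selection function
    have wit : ∀ (y : X) (n : ℕ) (q t : ℚ), ∃ p : X × ℝ,
        (∃ p' : X × ℝ, dist p'.1 y < (q : ℝ) ∧ 0 < p'.2 ∧ p'.2 < h ∧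
            Metric.ball p'.1 p'.2 ∩ B n = ∅ ∧ (t : ℝ) < g p'.2) →
        (dist p.1 y < (q : ℝ) ∧ 0 < p.2 ∧ p.2 < h ∧
            Metric.ball p.1 p.2 ∩ B n = ∅ ∧ (t : ℝ) < g p.2) := by
      intro y n q t
      by_cases hp : ∃ p' : X × ℝ, dist p'.1 y < (q : ℝ) ∧ 0 < p'.2 ∧ p'.2 < h ∧
          Metric.ball p'.1 p'.2 ∩ B n = ∅ ∧ (t : ℝ) < g p'.2
      · exact ⟨hp.choose, fun _ => hp.choose_spec⟩
      · exact ⟨(y, 0), fun h' => absurd h' hp⟩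
    choose w hw using wit
    set F : Set X → Set X := fun s =>
      s ∪ ⋃ y ∈ s, ⋃ n : ℕ, ⋃ q : ℚ, ⋃ t : ℚ, {(w y n q t).1} with hF
    set D : Set X := ⋃ k, F^[k] T with hD
    have hsub : ∀ k, F^[k] T ⊆ D := fun k => subset_iUnion (fun k => F^[k] T) k
    have hclosed : ∀ y ∈ D, ∀ (n : ℕ) (q t : ℚ), (w y n q t).1 ∈ D := by
      intro y hy n q t
      obtain ⟨k, hk⟩ := mem_iUnion.1 hy
      apply hsub (k + 1)
      rw [Function.iterate_succ_apply']
      refine Or.inr ?_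
      simp only [mem_iUnion, mem_singleton_iff]
      exact ⟨y, hk, n, q, t, rfl⟩
    have hFc : ∀ s : Set X, s.Countable → (F s).Countable := by
      intro s hs
      exact hs.union (hs.biUnion fun y _ => countable_iUnion fun n =>
        countable_iUnion fun q => countable_iUnion fun t => countable_singleton _)
    have hDc : D.Countable := countable_iUnion (fun k => by
      induction k with
      | zero => simpa using hTc
      | succ k ih => rw [Function.iterate_succ_apply']; exact hFc _ ih)
    have hTD : T ⊆ D := by simpa using hsub 0
    refine ⟨closure D, isClosed_closure, hDc.isSeparable.closure,
      hTsub.trans (closure_mono hTD), fun _ => ?_⟩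
    refine ⟨fun n => Subtype.val ⁻¹' B n, ?_, by rw [hA]; exact Set.preimage_iUnion⟩
    intro n x hx
    have hxB : (x : X) ∈ B n := hx
    have key : ∀ ε : ℝ, 0 < ε → ∃ (v : X) (r' : ℝ), v ∈ D ∧ 0 < r' ∧ r' < h ∧
        Metric.ball v r' ∩ B n = ∅ ∧ dist (x : X) v < g r' ∧ dist (x : X) v < ε := by
      intro ε hε
      obtain ⟨c, r, hc, hcr⟩ := hB n (x : X) hxB
      obtain ⟨N, hN⟩ := Metric.tendsto_atTop.1 hc (ε / 2) (half_pos hε)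
      set a := dist (x : X) (c N) with ha
      have haε : a < ε / 2 := by rw [ha, dist_comm]; exact hN N le_rfl
      have hag : a < g (r N) := by
        have := (hcr N).2.2.2
        simpa [Metric.mem_ball, ha] using this
      set M := min ε (g (r N)) with hM
      have haM : a < M := lt_min (by linarith) hag
      set η := (M - a) / 4 with hη
      have hη0 : 0 < η := by simp only [hη]; linarith
      obtain ⟨y, hyD, hxy⟩ := Metric.mem_closure_iff.1 x.2 η hη0
      obtain ⟨q, hq1, hq2⟩ := exists_rat_btwn (show a + η < a + 2 * η by linarith)
      obtain ⟨t, ht1, ht2⟩ := exists_rat_btwn (show a + 3 * η < M by simp only [hη]; linarith)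
      have hcy : dist (c N) y < (q : ℝ) := by
        have h1 : dist (c N) y ≤ dist (c N) (x : X) + dist (x : X) y := dist_triangle _ _ _
        have h2 : dist (c N) (x : X) = a := by rw [ha, dist_comm]
        linarith
      have hex : ∃ p' : X × ℝ, dist p'.1 y < (q : ℝ) ∧ 0 < p'.2 ∧ p'.2 < h ∧
          Metric.ball p'.1 p'.2 ∩ B n = ∅ ∧ (t : ℝ) < g p'.2 :=
        ⟨(c N, r N), hcy, (hcr N).1, (hcr N).2.1, (hcr N).2.2.1,
          lt_of_lt_of_le ht2 (min_le_right _ _)⟩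
      have hW := hw y n q t hex
      refine ⟨(w y n q t).1, (w y n q t).2, hclosed y hyD n q t, hW.2.1, hW.2.2.1,
        hW.2.2.2.1, ?_, ?_⟩
      · have h1 : dist (x : X) (w y n q t).1 ≤ dist (x : X) y + dist y (w y n q t).1 :=
          dist_triangle _ _ _
        have h2 : dist y (w y n q t).1 < (q : ℝ) := by rw [dist_comm]; exact hW.1
        have h3 : dist (x : X) (w y n q t).1 < a + 3 * η := by linarith
        exact h3.trans (ht1.trans hW.2.2.2.2)
      · have h1 : dist (x : X) (w y n q t).1 ≤ dist (x : X) y + dist y (w y n q t).1 :=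
          dist_triangle _ _ _
        have h2 : dist y (w y n q t).1 < (q : ℝ) := by rw [dist_comm]; exact hW.1
        have h3 : dist (x : X) (w y n q t).1 < a + 3 * η := by linarith
        have h4 : (a : ℝ) + 3 * η < M := by simp only [hη]; linarith
        exact h3.trans (h4.trans_le (min_le_left _ _))
    choose v r' hvD hr0 hrh hball hxg hxε using
      fun k : ℕ => key (1 / ((k : ℝ) + 1)) (by positivity)
    refine ⟨fun k => ⟨v k, subset_closure (hvD k)⟩, r', ?_, ?_⟩
    · rw [Metric.tendsto_atTop]
      intro ε hε
      obtain ⟨N, hN⟩ := exists_nat_gt (1 / ε)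
      refine ⟨N, fun k hk => ?_⟩
      have h1 : dist (⟨v k, subset_closure (hvD k)⟩ : closure D) x = dist (v k) (x : X) :=
        Subtype.dist_eq _ _
      have h2 : dist (v k) (x : X) < 1 / ((k : ℝ) + 1) := by
        rw [dist_comm]; exact hxε k
      have h3 : (1 : ℝ) / ε < (k : ℝ) + 1 := by
        have : (N : ℝ) ≤ (k : ℝ) := by exact_mod_cast hk
        linarith
      have h4 : (1 : ℝ) / ((k : ℝ) + 1) < ε := by
        have hk0 : (0 : ℝ) < (k : ℝ) + 1 := by positivity
        rw [div_lt_iff₀ hk0]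
        rw [div_lt_iff₀ hε] at h3
        nlinarith
      rw [h1]
      linarith
    · intro k
      refine ⟨hr0 k, hrh k, ?_, ?_⟩
      · rw [Set.eq_empty_iff_forall_notMem]
        rintro z ⟨hz1, hz2⟩
        have h1 : dist (z : X) (v k) < r' k := by
          have := Metric.mem_ball.1 hz1
          rwa [Subtype.dist_eq] at this
        exact Set.eq_empty_iff_forall_notMem.1 (hball k) (z : X)
          ⟨Metric.mem_ball.2 h1, hz2⟩
      · have : dist x (⟨v k, subset_closure (hvD k)⟩ : closure D) = dist (x : X) (v k) :=
          Subtype.dist_eq _ _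
        exact Metric.mem_ball.2 (by rw [this]; exact hxg k)
  · exact ⟨closure S₀, isClosed_closure, hS₀.closure, subset_closure,
      fun hp => absurd hp hAp⟩
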